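/- Let p ≥ 5 be a prime and let n ≥ r ≥ 1 be integers. Then the group G = ⟨x, y, z | x^{p^n} = y^{p^n} = z^{p^r} = 1, [x,y] = z, [x,z] = [y,z] = 1⟩ (where [a,b] = aba⁻¹b⁻¹) is a purely strongly real Beauville group: it admits a Beauville structure, and every Beauville structure of G is strongly real. -/

import Mathlib

/-- `beauvilleSigma x y` is Σ(x,y): the set of all conjugates of all powers of
`x`, `y` and `x*y` in the group `G`. -/
def beauvilleSigma {G : Type*} [Group G] (x y : G) : Set G :=
  {a | ∃ (i : ℕ) (g : G),
      a = g * x ^ i * g⁻¹ ∨ a = g * y ^ i * g⁻¹ ∨ a = g * (x * y) ^ i * g⁻¹}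

/-- `{(x₁,y₁),(x₂,y₂)}` is a Beauville structure for `G`:
both pairs generate `G` and `Σ(x₁,y₁) ∩ Σ(x₂,y₂) = {1}`. -/
def IsBeauvilleStructure {G : Type*} [Group G] (x₁ y₁ x₂ y₂ : G) : Prop :=
  Subgroup.closure {x₁, y₁} = ⊤ ∧ Subgroup.closure {x₂, y₂} = ⊤ ∧
    beauvilleSigma x₁ y₁ ∩ beauvilleSigma x₂ y₂ = {1}

/-- A Beauville structure `{(x₁,y₁),(x₂,y₂)}` is strongly real if there are an
automorphism `φ` of `G` and elements `g₁ g₂ : G` with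
`gᵢ * φ xᵢ * gᵢ⁻¹ = xᵢ⁻¹` and `gᵢ * φ yᵢ * gᵢ⁻¹ = yᵢ⁻¹` for `i = 1, 2`. -/
def IsStronglyRealStructure {G : Type*} [Group G] (x₁ y₁ x₂ y₂ : G) : Prop :=
  ∃ (φ : G ≃* G) (g₁ g₂ : G),
    g₁ * φ x₁ * g₁⁻¹ = x₁⁻¹ ∧ g₁ * φ y₁ * g₁⁻¹ = y₁⁻¹ ∧
    g₂ * φ x₂ * g₂⁻¹ = x₂⁻¹ ∧ g₂ * φ y₂ * g₂⁻¹ = y₂⁻¹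

/-- The relators `x^{p^n}, y^{p^n}, z^{p^r}, [x,y]z⁻¹, [x,z], [y,z]` (with
`[a,b] = aba⁻¹b⁻¹`) in the free group on three generators `x = 0`, `y = 1`, `z = 2`. -/
def heisenbergRels (p n r : ℕ) : Set (FreeGroup (Fin 3)) :=
  { FreeGroup.of 0 ^ p ^ n, FreeGroup.of 1 ^ p ^ n, FreeGroup.of 2 ^ p ^ r,
    FreeGroup.of 0 * FreeGroup.of 1 * (FreeGroup.of 0)⁻¹ * (FreeGroup.of 1)⁻¹ *
      (FreeGroup.of 2)⁻¹,
    FreeGroup.of 0 * FreeGroup.of 2 * (FreeGroup.of 0)⁻¹ * (FreeGroup.of 2)⁻¹,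
    FreeGroup.of 1 * FreeGroup.of 2 * (FreeGroup.of 1)⁻¹ * (FreeGroup.of 2)⁻¹ }

/-- The group `G = ⟨x, y, z ∣ x^{p^n} = y^{p^n} = z^{p^r} = 1, [x,y] = z,
[x,z] = [y,z] = 1⟩`. -/
abbrev heisenbergGroup (p n r : ℕ) : Type := PresentedGroup (heisenbergRels p n r)

/-- The generator `x` of `heisenbergGroup p n r`. -/
def heisX (p n r : ℕ) : heisenbergGroup p n r := PresentedGroup.of 0

/-- The generator `y` of `heisenbergGroup p n r`. -/
def heisY (p n r : ℕ) : heisenbergGroup p n r := PresentedGroup.of 1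

/-- The generator `z` of `heisenbergGroup p n r`. -/
def heisZ (p n r : ℕ) : heisenbergGroup p n r := PresentedGroup.of 2

set_option linter.unusedSectionVars false
set_option linter.unreachableTactic false
set_option linter.unusedTactic false
set_option linter.unnecessarySeqFocus false
set_option maxHeartbeats 1600000

namespace HeisModel

@[ext]
structure Heis (p n r : ℕ) where
  a : ZMod (p ^ n)
  b : ZMod (p ^ n)
  c : ZMod (p ^ r)

namespace Heis

variable {p n r : ℕ} [Fact (p ^ r ∣ p ^ n)]

def f : ZMod (p ^ n) →+* ZMod (p ^ r) :=
  ZMod.castHom (Fact.out : p ^ r ∣ p ^ n) (ZMod (p ^ r))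

instance : Mul (Heis p n r) :=
  ⟨fun w w' => ⟨w.a + w'.a, w.b + w'.b, w.c + w'.c + f (w.a * w'.b)⟩⟩
instance : One (Heis p n r) := ⟨⟨0, 0, 0⟩⟩
instance : Inv (Heis p n r) := ⟨fun w => ⟨-w.a, -w.b, -w.c + f (w.a * w.b)⟩⟩

@[simp] lemma mul_a (w w' : Heis p n r) : (w * w').a = w.a + w'.a := rfl
@[simp] lemma mul_b (w w' : Heis p n r) : (w * w').b = w.b + w'.b := rfl
@[simp] lemma mul_c (w w' : Heis p n r) : (w * w').c = w.c + w'.c + f (w.a * w'.b) := rfl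
@[simp] lemma one_a : (1 : Heis p n r).a = 0 := rfl
@[simp] lemma one_b : (1 : Heis p n r).b = 0 := rfl
@[simp] lemma one_c : (1 : Heis p n r).c = 0 := rfl
@[simp] lemma inv_a (w : Heis p n r) : (w⁻¹).a = -w.a := rfl
@[simp] lemma inv_b (w : Heis p n r) : (w⁻¹).b = -w.b := rfl
@[simp] lemma inv_c (w : Heis p n r) : (w⁻¹).c = -w.c + f (w.a * w.b) := rfl

instance : Group (Heis p n r) where
  mul_assoc w₁ w₂ w₃ := by ext <;> simp [map_mul, map_add] <;> ring
  one_mul w := by ext <;> simp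
  mul_one w := by ext <;> simp
  inv_mul_cancel w := by ext <;> simp [map_mul, map_neg] <;> ring

lemma pow_def (w : Heis p n r) (m : ℕ) :
    w ^ m = ⟨(m : ZMod (p ^ n)) * w.a, (m : ZMod (p ^ n)) * w.b,
      (m : ZMod (p ^ r)) * w.c + (m.choose 2 : ZMod (p ^ r)) * f (w.a * w.b)⟩ := by
  induction m with
  | zero => ext <;> simp
  | succ k ih =>
      rw [pow_succ, ih]
      ext <;> simp [Nat.choose_succ_succ, Nat.choose_one_right, map_mul, map_natCast] <;>
        push_cast <;> ring

@[simp] lemma pow_a (w : Heis p n r) (m : ℕ) : (w ^ m).a = (m : ZMod (p ^ n)) * w.a := by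
  rw [pow_def]
@[simp] lemma pow_b (w : Heis p n r) (m : ℕ) : (w ^ m).b = (m : ZMod (p ^ n)) * w.b := by
  rw [pow_def]
lemma pow_c (w : Heis p n r) (m : ℕ) :
    (w ^ m).c = (m : ZMod (p ^ r)) * w.c + (m.choose 2 : ZMod (p ^ r)) * f (w.a * w.b) := by
  rw [pow_def]

lemma conj_def (g w : Heis p n r) :
    g * w * g⁻¹ = ⟨w.a, w.b, w.c + f (g.a * w.b - w.a * g.b)⟩ := by
  ext <;> simp [map_mul, map_add, map_sub, map_neg] <;> ring

@[simp] lemma conj_a (g w : Heis p n r) : (g * w * g⁻¹).a = w.a := by rw [conj_def]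
@[simp] lemma conj_b (g w : Heis p n r) : (g * w * g⁻¹).b = w.b := by rw [conj_def]

lemma commutator_eq (w w' : Heis p n r) :
    w * w' * w⁻¹ * w'⁻¹ = ⟨0, 0, f (w.a * w'.b - w'.a * w.b)⟩ := by
  ext <;> simp [map_mul, map_add, map_sub, map_neg] <;> ring

def phi : Heis p n r ≃* Heis p n r where
  toFun w := ⟨-w.a, -w.b, w.c⟩
  invFun w := ⟨-w.a, -w.b, w.c⟩
  left_inv w := by ext <;> simp
  right_inv w := by ext <;> simp
  map_mul' w w' := by ext <;> simp [map_mul, map_neg] <;> ring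

section Main

variable (hp : p.Prime) (hp5 : 5 ≤ p) (hr : 1 ≤ r) (hrn : r ≤ n)

include hp hp5 in
lemma isUnit_nat {k m : ℕ} (hm : ¬ p ∣ m) : IsUnit ((m : ℕ) : ZMod (p ^ k)) := by
  haveI : NeZero (p ^ k) := ⟨pow_ne_zero _ (by omega)⟩
  exact (ZMod.isUnit_iff_coprime m (p ^ k)).mpr
    (Nat.Coprime.pow_right k ((Nat.Prime.coprime_iff_not_dvd hp).mpr hm).symm)

include hp hp5 in
lemma isUnit_two (k : ℕ) : IsUnit (2 : ZMod (p ^ k)) := by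
  have := isUnit_nat (p := p) hp hp5 (k := k) (m := 2)
    (fun h => absurd (Nat.le_of_dvd (by norm_num) h) (by omega))
  simpa using this

include hp hp5 in
lemma isUnit_three (k : ℕ) : IsUnit (3 : ZMod (p ^ k)) := by
  have := isUnit_nat (p := p) hp hp5 (k := k) (m := 3)
    (fun h => absurd (Nat.le_of_dvd (by norm_num) h) (by omega))
  simpa using this

include hp hp5 in
lemma conj_pow_eq_one {i : ℕ} (hi : ((i : ℕ) : ZMod (p ^ n)) = 0) (g w : Heis p n r) :
    g * w ^ i * g⁻¹ = 1 := by
  have hdvd : p ^ n ∣ i := (ZMod.natCast_eq_zero_iff _ _).mp hi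
  have hdr : p ^ r ∣ i := dvd_trans (Fact.out : p ^ r ∣ p ^ n) hdvd
  have hir : ((i : ℕ) : ZMod (p ^ r)) = 0 := (ZMod.natCast_eq_zero_iff _ _).mpr hdr
  have hch : ((i.choose 2 : ℕ) : ZMod (p ^ r)) = 0 := by
    rcases Nat.eq_zero_or_pos i with h0 | h0
    · simp [h0]
    · have h2 : i.choose 2 * 2 = i * (i - 1) := by
        rw [Nat.choose_two_right, Nat.div_mul_cancel]
        rcases Nat.even_or_odd i with h | h
        · exact Dvd.dvd.mul_right h.two_dvd _
        · exact Dvd.dvd.mul_left (Nat.Odd.sub_odd h odd_one).two_dvd _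
      have hdd : p ^ r ∣ i.choose 2 * 2 := h2 ▸ Dvd.dvd.mul_right hdr _
      have hcop : Nat.Coprime (p ^ r) 2 :=
        Nat.Coprime.pow_left r ((Nat.coprime_primes hp Nat.prime_two).mpr (by omega))
      exact (ZMod.natCast_eq_zero_iff _ _).mpr (hcop.dvd_of_dvd_mul_right hdd)
  rw [conj_def, pow_def]
  ext <;> simp [hi, hir, hch]

include hp hp5 hr hrn in
lemma closure_pair_eq_top (t₁ t₂ : Heis p n r)
    (hδ : IsUnit (t₁.a * t₂.b - t₂.a * t₁.b)) :
    Subgroup.closure {t₁, t₂} = ⊤ := by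
  haveI : NeZero (p ^ n) := ⟨pow_ne_zero _ (by omega)⟩
  haveI : NeZero (p ^ r) := ⟨pow_ne_zero _ (by omega)⟩
  obtain ⟨u, hu⟩ := hδ
  rw [Subgroup.eq_top_iff']
  intro w
  set S := Subgroup.closure ({t₁, t₂} : Set (Heis p n r)) with hS
  have ht₁ : t₁ ∈ S := Subgroup.subset_closure (by simp)
  have ht₂ : t₂ ∈ S := Subgroup.subset_closure (by simp)
  have hcom : (⟨0, 0, f (t₁.a * t₂.b - t₂.a * t₁.b)⟩ : Heis p n r) ∈ S := by
    rw [← commutator_eq]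
    exact mul_mem (mul_mem (mul_mem ht₁ ht₂) (inv_mem ht₁)) (inv_mem ht₂)
  set u' : (ZMod (p ^ r))ˣ := Units.map (f (p := p) (n := n) (r := r)).toMonoidHom u with hu'
  have hu'c : (u' : ZMod (p ^ r)) = f t₁.a * f t₂.b - f t₂.a * f t₁.b := by
    simp [hu', hu, map_sub, map_mul]
  have hz : ∀ γ : ZMod (p ^ r), (⟨0, 0, γ⟩ : Heis p n r) ∈ S := by
    intro γ
    have : (⟨0, 0, γ⟩ : Heis p n r)
        = (⟨0, 0, f (t₁.a * t₂.b - t₂.a * t₁.b)⟩ : Heis p n r) ^ ((γ * ↑u'⁻¹).val) := by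
      rw [pow_def]
      ext <;> simp [ZMod.natCast_rightInverse _]
      rw [← hu'c, mul_assoc, Units.inv_mul, mul_one]
    rw [this]
    exact pow_mem hcom _
  obtain ⟨A, B, C⟩ := w
  have huinv : ((↑u⁻¹ : ZMod (p ^ n)) * (t₁.a * t₂.b - t₂.a * t₁.b)) = 1 := by
    rw [← hu, Units.inv_mul]
  set I : ZMod (p ^ n) := ↑u⁻¹ * (A * t₂.b - B * t₂.a) with hI
  set J : ZMod (p ^ n) := ↑u⁻¹ * (B * t₁.a - A * t₁.b) with hJ
  set w₀ := t₁ ^ I.val * t₂ ^ J.val with hw₀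
  have ha : w₀.a = A := by
    rw [hw₀]
    simp [ZMod.natCast_rightInverse _]
    rw [hI, hJ]
    linear_combination A * huinv
  have hb : w₀.b = B := by
    rw [hw₀]
    simp [ZMod.natCast_rightInverse _]
    rw [hI, hJ]
    linear_combination B * huinv
  have : (⟨A, B, C⟩ : Heis p n r) = w₀ * ⟨0, 0, C - w₀.c⟩ := by
    ext <;> simp [ha, hb]
  rw [this]
  exact mul_mem (mul_mem (pow_mem ht₁ _) (pow_mem ht₂ _)) (hz _)

include hp hp5 hr hrn in
lemma sigma_inter :
    beauvilleSigma (⟨1, 0, 0⟩ : Heis p n r) ⟨0, 1, 0⟩ ∩ beauvilleSigma ⟨1, 2, 0⟩ ⟨1, -1, 0⟩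
      = {1} := by
  haveI : NeZero (p ^ n) := ⟨pow_ne_zero _ (by omega)⟩
  have h2 : IsUnit (2 : ZMod (p ^ n)) := isUnit_two hp hp5 n
  apply Set.eq_singleton_iff_unique_mem.mpr
  constructor
  · exact ⟨⟨0, 1, Or.inl (by simp)⟩, ⟨0, 1, Or.inl (by simp)⟩⟩
  · rintro s ⟨⟨i, g, h1⟩, ⟨j, g', h2'⟩⟩
    have key : ∀ (w : Heis p n r), s = g * w ^ i * g⁻¹ → ((i : ℕ) : ZMod (p ^ n)) = 0 →
        s = 1 := fun w hs hi => hs.trans (conj_pow_eq_one hp hp5 hi g w)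
    have key' : ∀ (w : Heis p n r), s = g' * w ^ j * g'⁻¹ → ((j : ℕ) : ZMod (p ^ n)) = 0 →
        s = 1 := fun w hs hj => hs.trans (conj_pow_eq_one hp hp5 hj g' w)
    have hcancel : ∀ t : ZMod (p ^ n), 2 * t = 0 → t = 0 := fun t ht =>
      h2.mul_left_cancel (by simpa using ht)
    rcases h1 with h1 | h1 | h1 <;> rcases h2' with h2' | h2' | h2' <;>
      (have ea := congrArg Heis.a (h1.symm.trans h2');
       have eb := congrArg Heis.b (h1.symm.trans h2');
       simp at ea eb)
    · exact key' _ h2' (hcancel _ (by linear_combination -eb))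
    · exact key' _ h2' eb
    · exact key' _ h2' (by linear_combination -eb)
    · exact key' _ h2' ea.symm
    · exact key' _ h2' ea.symm
    · exact key' _ h2' (hcancel _ (by linear_combination -ea))
    · exact key' _ h2' (by linear_combination ea - eb)
    · exact key' _ h2' (hcancel _ (by linear_combination eb - ea))
    · exact key' _ h2' (by linear_combination eb - ea)

include hp hp5 hr hrn in
lemma exists_strong_conj {w w' : Heis p n r}
    (hgen : Subgroup.closure {w, w'} = ⊤) :
    ∃ g : Heis p n r, g * phi w * g⁻¹ = w⁻¹ ∧ g * phi w' * g⁻¹ = w'⁻¹ := by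
  haveI : NeZero (p ^ n) := ⟨pow_ne_zero _ (by omega)⟩
  haveI : NeZero (p ^ r) := ⟨pow_ne_zero _ (by omega)⟩
  haveI : Fact (1 < p) := ⟨by omega⟩
  have hn0 : n ≠ 0 := by omega
  set q : ZMod (p ^ n) →+* ZMod p := ZMod.castHom (dvd_pow_self p hn0) (ZMod p) with hq
  -- Step A: no nonzero functional kills both generators
  have claim : ∀ α β : ZMod p, α * q w.a + β * q w.b = 0 →
      α * q w'.a + β * q w'.b = 0 → α = 0 ∧ β = 0 := by
    intro α β h1 h2
    let L : Heis p n r →* Multiplicative (ZMod p) :=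
      MonoidHom.mk' (fun t => Multiplicative.ofAdd (α * q t.a + β * q t.b))
        (by
          intro t t'
          show Multiplicative.ofAdd (α * q (t.a + t'.a) + β * q (t.b + t'.b)) = _
          rw [← ofAdd_add]
          congr 1
          simp only [map_add]
          ring)
    have hker : ∀ t : Heis p n r, L t = 1 := by
      have hmem : ∀ t : Heis p n r, α * q t.a + β * q t.b = 0 → t ∈ L.ker := by
        intro t ht
        exact MonoidHom.mem_ker.mpr (by
          show Multiplicative.ofAdd (α * q t.a + β * q t.b) = 1
          rw [ht]; rfl)
      have hle : Subgroup.closure ({w, w'} : Set (Heis p n r)) ≤ L.ker := by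
        apply (Subgroup.closure_le _).mpr
        rintro t ht
        rcases (by simpa using ht : t = w ∨ t = w') with rfl | rfl
        exacts [hmem _ h1, hmem _ h2]
      rw [hgen] at hle
      exact fun t => MonoidHom.mem_ker.mp (hle (Subgroup.mem_top t))
    constructor
    · have h := hker ⟨1, 0, 0⟩
      have h' : Multiplicative.ofAdd (α * q 1 + β * q 0) = 1 := h
      simpa using h'
    · have h := hker ⟨0, 1, 0⟩
      have h' : Multiplicative.ofAdd (α * q 0 + β * q 1) = 1 := h
      simpa using h'
  -- Step B: the determinant is nonzero mod p
  have hdet : q (w.a * w'.b - w'.a * w.b) ≠ 0 := by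
    intro h0
    rw [map_sub, map_mul, map_mul] at h0
    by_cases hw : q w.a = 0 ∧ q w.b = 0
    · obtain ⟨hwa, hwb⟩ := hw
      obtain ⟨h1a, h1b⟩ := claim (q w'.b) (-(q w'.a))
        (by rw [hwa, hwb]; ring) (by ring)
      rw [neg_eq_zero] at h1b
      obtain ⟨h2a, _⟩ := claim 1 0 (by rw [hwa]; ring) (by rw [h1b]; ring)
      exact one_ne_zero h2a
    · obtain ⟨h1a, h1b⟩ := claim (q w.b) (-(q w.a)) (by ring)
        (by linear_combination -h0)
      rw [neg_eq_zero] at h1b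
      exact hw ⟨h1b, h1a⟩
  -- Step C: the determinant is a unit in ZMod (p ^ r)
  have hunit : IsUnit (f w.a * f w'.b - f w'.a * f w.b : ZMod (p ^ r)) := by
    set δ := w.a * w'.b - w'.a * w.b with hδ
    have hv : ((δ.val : ℕ) : ZMod (p ^ n)) = δ := ZMod.natCast_rightInverse δ
    have hpv : ¬ p ∣ δ.val := by
      intro hdvd
      apply hdet
      have key2 : q ((δ.val : ℕ) : ZMod (p ^ n)) = ((δ.val : ℕ) : ZMod p) :=
        map_natCast q δ.val
      rw [hv] at key2
      rw [key2]
      exact (ZMod.natCast_eq_zero_iff _ p).mpr hdvd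
    have hres := isUnit_nat (p := p) hp hp5 (k := r) (m := δ.val) hpv
    have key : f ((δ.val : ℕ) : ZMod (p ^ n)) = ((δ.val : ℕ) : ZMod (p ^ r)) :=
      map_natCast f δ.val
    rw [hv] at key
    rw [← key, hδ, map_sub, map_mul, map_mul] at hres
    exact hres
  -- Step D: solve the linear system
  obtain ⟨u, hu⟩ := hunit
  have huu : ((u⁻¹ : (ZMod (p ^ r))ˣ) : ZMod (p ^ r))
      * (f w.a * f w'.b - f w'.a * f w.b) = 1 := by
    rw [← hu, Units.inv_mul]
  set V : ZMod (p ^ r) := ((u⁻¹ : (ZMod (p ^ r))ˣ) : ZMod (p ^ r)) *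
      (f w'.b * (-(2 * w.c) + f w.a * f w.b) - f w.b * (-(2 * w'.c) + f w'.a * f w'.b))
    with hV
  set U : ZMod (p ^ r) := ((u⁻¹ : (ZMod (p ^ r))ˣ) : ZMod (p ^ r)) *
      (f w'.a * (-(2 * w.c) + f w.a * f w.b) - f w.a * (-(2 * w'.c) + f w'.a * f w'.b))
    with hU
  refine ⟨⟨((U.val : ℕ) : ZMod (p ^ n)), ((V.val : ℕ) : ZMod (p ^ n)), 0⟩, ?_, ?_⟩
  · rw [show phi w = (⟨-w.a, -w.b, w.c⟩ : Heis p n r) from rfl, conj_def]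
    ext
    · simp
    · simp
    · show w.c + f (((U.val : ℕ) : ZMod (p ^ n)) * -w.b - -w.a * ((V.val : ℕ) : ZMod (p ^ n)))
        = -w.c + f (w.a * w.b)
      simp only [map_sub, map_mul, map_neg, map_natCast]
      simp only [ZMod.natCast_val, ZMod.cast_id]
      rw [hU, hV]
      linear_combination (-(2 * w.c) + f w.a * f w.b) * huu
  · rw [show phi w' = (⟨-w'.a, -w'.b, w'.c⟩ : Heis p n r) from rfl, conj_def]
    ext
    · simp
    · simp
    · show w'.c + f (((U.val : ℕ) : ZMod (p ^ n)) * -w'.b - -w'.a * ((V.val : ℕ) : ZMod (p ^ n)))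
        = -w'.c + f (w'.a * w'.b)
      simp only [map_sub, map_mul, map_neg, map_natCast]
      simp only [ZMod.natCast_val, ZMod.cast_id]
      rw [hU, hV]
      linear_combination (-(2 * w'.c) + f w'.a * f w'.b) * huu

end Main
end Heis
end HeisModel

namespace HeisPres

variable (p n r : ℕ)

lemma mk_rel {w : FreeGroup (Fin 3)} (h : w ∈ heisenbergRels p n r) :
    PresentedGroup.mk (heisenbergRels p n r) w = 1 :=
  (QuotientGroup.eq_one_iff w).mpr (Subgroup.subset_normalClosure h)

lemma relX : (heisX p n r) ^ (p ^ n) = 1 := by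
  have h := mk_rel p n r (show FreeGroup.of 0 ^ p ^ n ∈ heisenbergRels p n r by
    simp [heisenbergRels])
  rwa [map_pow] at h

lemma relY : (heisY p n r) ^ (p ^ n) = 1 := by
  have h := mk_rel p n r (show FreeGroup.of 1 ^ p ^ n ∈ heisenbergRels p n r by
    simp [heisenbergRels])
  rwa [map_pow] at h

lemma relZ : (heisZ p n r) ^ (p ^ r) = 1 := by
  have h := mk_rel p n r (show FreeGroup.of 2 ^ p ^ r ∈ heisenbergRels p n r by
    simp [heisenbergRels])
  rwa [map_pow] at h

lemma relXY : heisX p n r * heisY p n r * (heisX p n r)⁻¹ * (heisY p n r)⁻¹ *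
    (heisZ p n r)⁻¹ = 1 := by
  have h := mk_rel p n r (show FreeGroup.of 0 * FreeGroup.of 1 * (FreeGroup.of 0)⁻¹ *
      (FreeGroup.of 1)⁻¹ * (FreeGroup.of 2)⁻¹ ∈ heisenbergRels p n r by
    simp [heisenbergRels])
  simp only [map_mul, map_inv] at h; exact h

lemma relXZ : heisX p n r * heisZ p n r * (heisX p n r)⁻¹ * (heisZ p n r)⁻¹ = 1 := by
  have h := mk_rel p n r (show FreeGroup.of 0 * FreeGroup.of 2 * (FreeGroup.of 0)⁻¹ *
      (FreeGroup.of 2)⁻¹ ∈ heisenbergRels p n r by simp [heisenbergRels])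
  simp only [map_mul, map_inv] at h; exact h

lemma relYZ : heisY p n r * heisZ p n r * (heisY p n r)⁻¹ * (heisZ p n r)⁻¹ = 1 := by
  have h := mk_rel p n r (show FreeGroup.of 1 * FreeGroup.of 2 * (FreeGroup.of 1)⁻¹ *
      (FreeGroup.of 2)⁻¹ ∈ heisenbergRels p n r by simp [heisenbergRels])
  simp only [map_mul, map_inv] at h; exact h

lemma zx_comm : heisZ p n r * heisX p n r = heisX p n r * heisZ p n r := by
  have h : heisX p n r * heisZ p n r =
      (heisX p n r * heisZ p n r * (heisX p n r)⁻¹ * (heisZ p n r)⁻¹) *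
        (heisZ p n r * heisX p n r) := by group
  rw [relXZ, one_mul] at h
  exact h.symm

lemma zy_comm : heisZ p n r * heisY p n r = heisY p n r * heisZ p n r := by
  have h : heisY p n r * heisZ p n r =
      (heisY p n r * heisZ p n r * (heisY p n r)⁻¹ * (heisZ p n r)⁻¹) *
        (heisZ p n r * heisY p n r) := by group
  rw [relYZ, one_mul] at h
  exact h.symm

lemma z_central (g : heisenbergGroup p n r) : heisZ p n r * g = g * heisZ p n r := by
  have : g ∈ Subgroup.centralizer ({heisZ p n r} : Set (heisenbergGroup p n r)) := by
    apply PresentedGroup.generated_by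
    intro j
    rw [Subgroup.mem_centralizer_iff]
    rintro h ⟨rfl⟩
    fin_cases j
    · exact zx_comm p n r
    · exact zy_comm p n r
    · rfl
  exact Subgroup.mem_centralizer_iff.mp this _ rfl

lemma zpow_central (k : ℕ) (g : heisenbergGroup p n r) :
    heisZ p n r ^ k * g = g * heisZ p n r ^ k :=
  (show Commute (heisZ p n r) g from z_central p n r g).pow_left k

lemma xy_eq : heisX p n r * heisY p n r = heisY p n r * heisX p n r * heisZ p n r := by
  have h : heisX p n r * heisY p n r =
      (heisX p n r * heisY p n r * (heisX p n r)⁻¹ * (heisY p n r)⁻¹ * (heisZ p n r)⁻¹) *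
        (heisZ p n r * (heisY p n r * heisX p n r)) := by group
  rw [relXY, one_mul] at h
  rw [h, z_central]

lemma x_ypow (b : ℕ) : heisX p n r * heisY p n r ^ b
    = heisY p n r ^ b * heisX p n r * heisZ p n r ^ b := by
  induction b with
  | zero => simp
  | succ k ih =>
      rw [pow_succ, ← mul_assoc, ih]
      calc heisY p n r ^ k * heisX p n r * heisZ p n r ^ k * heisY p n r
          = heisY p n r ^ k * heisX p n r * (heisZ p n r ^ k * heisY p n r) := by group
        _ = heisY p n r ^ k * (heisX p n r * heisY p n r) * heisZ p n r ^ k := by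
            rw [zpow_central]; group
        _ = heisY p n r ^ k * (heisY p n r * heisX p n r * heisZ p n r) *
              heisZ p n r ^ k := by rw [xy_eq]
        _ = heisY p n r ^ (k + 1) * heisX p n r * heisZ p n r ^ (k + 1) := by
            rw [pow_succ, pow_succ]; group

lemma xpow_ypow (a b : ℕ) : heisX p n r ^ a * heisY p n r ^ b
    = heisY p n r ^ b * heisX p n r ^ a * heisZ p n r ^ (a * b) := by
  induction a with
  | zero => simp
  | succ k ih =>
      calc heisX p n r ^ (k + 1) * heisY p n r ^ b
          = heisX p n r ^ k * (heisX p n r * heisY p n r ^ b) := by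
            rw [pow_succ]; group
        _ = heisX p n r ^ k * (heisY p n r ^ b * heisX p n r * heisZ p n r ^ b) := by
            rw [x_ypow]
        _ = (heisX p n r ^ k * heisY p n r ^ b) * heisX p n r * heisZ p n r ^ b := by
            group
        _ = heisY p n r ^ b * heisX p n r ^ k * heisZ p n r ^ (k * b) * heisX p n r *
              heisZ p n r ^ b := by rw [ih]
        _ = heisY p n r ^ b * heisX p n r ^ k * (heisZ p n r ^ (k * b) * heisX p n r) *
              heisZ p n r ^ b := by group
        _ = heisY p n r ^ b * heisX p n r ^ k * (heisX p n r * heisZ p n r ^ (k * b)) *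
              heisZ p n r ^ b := by rw [zpow_central]
        _ = heisY p n r ^ b * heisX p n r ^ (k + 1) * heisZ p n r ^ (k * b + b) := by
            rw [pow_succ, pow_add]; group
        _ = heisY p n r ^ b * heisX p n r ^ (k + 1) * heisZ p n r ^ ((k + 1) * b) := by
            rw [Nat.succ_mul]

lemma form_mul (b1 a1 c1 b2 a2 c2 : ℕ) :
    (heisY p n r ^ b1 * heisX p n r ^ a1 * heisZ p n r ^ c1) *
      (heisY p n r ^ b2 * heisX p n r ^ a2 * heisZ p n r ^ c2)
    = heisY p n r ^ (b1 + b2) * heisX p n r ^ (a1 + a2) *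
        heisZ p n r ^ (a1 * b2 + (c1 + c2)) := by
  calc (heisY p n r ^ b1 * heisX p n r ^ a1 * heisZ p n r ^ c1) *
      (heisY p n r ^ b2 * heisX p n r ^ a2 * heisZ p n r ^ c2)
      = heisY p n r ^ b1 * heisX p n r ^ a1 *
          (heisZ p n r ^ c1 * (heisY p n r ^ b2 * heisX p n r ^ a2 * heisZ p n r ^ c2)) := by
        group
    _ = heisY p n r ^ b1 * heisX p n r ^ a1 *
          ((heisY p n r ^ b2 * heisX p n r ^ a2 * heisZ p n r ^ c2) * heisZ p n r ^ c1) := by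
        rw [zpow_central]
    _ = heisY p n r ^ b1 * ((heisX p n r ^ a1 * heisY p n r ^ b2) *
          (heisX p n r ^ a2 * (heisZ p n r ^ c2 * heisZ p n r ^ c1))) := by group
    _ = heisY p n r ^ b1 * ((heisY p n r ^ b2 * heisX p n r ^ a1 *
          heisZ p n r ^ (a1 * b2)) * (heisX p n r ^ a2 *
          (heisZ p n r ^ c2 * heisZ p n r ^ c1))) := by rw [xpow_ypow]
    _ = (heisY p n r ^ b1 * heisY p n r ^ b2) * heisX p n r ^ a1 *
          ((heisZ p n r ^ (a1 * b2) * heisX p n r ^ a2) *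
            (heisZ p n r ^ c2 * heisZ p n r ^ c1)) := by group
    _ = (heisY p n r ^ b1 * heisY p n r ^ b2) * heisX p n r ^ a1 *
          ((heisX p n r ^ a2 * heisZ p n r ^ (a1 * b2)) *
            (heisZ p n r ^ c2 * heisZ p n r ^ c1)) := by
        rw [show heisZ p n r ^ (a1 * b2) * heisX p n r ^ a2
            = heisX p n r ^ a2 * heisZ p n r ^ (a1 * b2) from by
          induction a2 with
          | zero => simp
          | succ k ih => rw [pow_succ, ← mul_assoc, ih]; rw [mul_assoc, zpow_central]; group]
    _ = heisY p n r ^ (b1 + b2) * heisX p n r ^ (a1 + a2) *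
          (heisZ p n r ^ (a1 * b2) * (heisZ p n r ^ c2 * heisZ p n r ^ c1)) := by
        rw [pow_add, pow_add]; group
    _ = heisY p n r ^ (b1 + b2) * heisX p n r ^ (a1 + a2) *
          heisZ p n r ^ (a1 * b2 + (c1 + c2)) := by
        rw [← pow_add, ← pow_add, Nat.add_comm c2 c1]

end HeisPres


namespace HeisIso
open HeisModel HeisPres

variable (p n r : ℕ) [Fact (p ^ r ∣ p ^ n)] [NeZero (p ^ n)] [NeZero (p ^ r)]
  [Fact (1 < p ^ n)] [Fact (1 < p ^ r)]

def gens : Fin 3 → Heis p n r := ![⟨1, 0, 0⟩, ⟨0, 1, 0⟩, ⟨0, 0, 1⟩]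

lemma lift_rels : ∀ w ∈ heisenbergRels p n r, FreeGroup.lift (gens p n r) w = 1 := by
  intro w hw
  simp only [heisenbergRels, Set.mem_insert_iff, Set.mem_singleton_iff] at hw
  rcases hw with rfl | rfl | rfl | rfl | rfl | rfl <;>
    simp only [map_mul, map_pow, map_inv, FreeGroup.lift_apply_of,
      show gens p n r 0 = ⟨1, 0, 0⟩ from rfl, show gens p n r 1 = ⟨0, 1, 0⟩ from rfl,
      show gens p n r 2 = ⟨0, 0, 1⟩ from rfl]
  · rw [Heis.pow_def]; ext <;> simp
  · rw [Heis.pow_def]; ext <;> simp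
  · rw [Heis.pow_def]; ext <;> simp
  · ext <;> simp
  · ext <;> simp
  · ext <;> simp

def Phi : heisenbergGroup p n r →* Heis p n r := PresentedGroup.toGroup (lift_rels p n r)

lemma Phi_X : Phi p n r (heisX p n r) = ⟨1, 0, 0⟩ := PresentedGroup.toGroup.of _
lemma Phi_Y : Phi p n r (heisY p n r) = ⟨0, 1, 0⟩ := PresentedGroup.toGroup.of _
lemma Phi_Z : Phi p n r (heisZ p n r) = ⟨0, 0, 1⟩ := PresentedGroup.toGroup.of _

lemma pow_congr {G : Type*} [Group G] {t : G} {N : ℕ} [NeZero N] (h : t ^ N = 1) {m k : ℕ}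
    (hmk : ((m : ZMod N)) = ((k : ZMod N))) : t ^ m = t ^ k := by
  have hv := congrArg ZMod.val hmk
  rw [ZMod.val_natCast, ZMod.val_natCast] at hv
  rw [pow_eq_pow_mod m h, pow_eq_pow_mod k h, hv]

def Psi : Heis p n r →* heisenbergGroup p n r :=
  MonoidHom.mk'
    (fun w => heisY p n r ^ w.b.val * heisX p n r ^ w.a.val * heisZ p n r ^ w.c.val)
    (by
      intro w w'
      show heisY p n r ^ (w.b + w'.b).val * heisX p n r ^ (w.a + w'.a).val *
          heisZ p n r ^ (w.c + w'.c + Heis.f (w.a * w'.b)).val = _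
      rw [form_mul]
      have e1 : heisY p n r ^ (w.b + w'.b).val = heisY p n r ^ (w.b.val + w'.b.val) :=
        pow_congr (relY p n r) (by push_cast [ZMod.natCast_val, ZMod.cast_id]; ring)
      have e2 : heisX p n r ^ (w.a + w'.a).val = heisX p n r ^ (w.a.val + w'.a.val) :=
        pow_congr (relX p n r) (by push_cast [ZMod.natCast_val, ZMod.cast_id]; ring)
      have e3 : heisZ p n r ^ (w.c + w'.c + Heis.f (w.a * w'.b)).val
          = heisZ p n r ^ (w.a.val * w'.b.val + (w.c.val + w'.c.val)) :=
        pow_congr (relZ p n r) (by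
          push_cast [ZMod.natCast_val, ZMod.cast_id, ZMod.castHom_apply]
          rw [map_mul]
          simp only [Heis.f, ZMod.castHom_apply]
          ring)
      rw [e1, e2, e3])

lemma Phi_Psi (w : Heis p n r) : Phi p n r (Psi p n r w) = w := by
  show Phi p n r (heisY p n r ^ w.b.val * heisX p n r ^ w.a.val * heisZ p n r ^ w.c.val) = w
  rw [map_mul, map_mul, map_pow, map_pow, map_pow, Phi_X, Phi_Y, Phi_Z]
  ext <;> simp [Heis.pow_def, ZMod.natCast_val, ZMod.cast_id]

lemma Psi_Phi (g : heisenbergGroup p n r) : Psi p n r (Phi p n r g) = g := by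
  have h : (Psi p n r).comp (Phi p n r) = MonoidHom.id _ := by
    apply PresentedGroup.ext
    intro x
    fin_cases x
    · show Psi p n r (Phi p n r (heisX p n r)) = heisX p n r
      rw [Phi_X]
      show heisY p n r ^ (0 : ZMod (p ^ n)).val * heisX p n r ^ (1 : ZMod (p ^ n)).val *
          heisZ p n r ^ (0 : ZMod (p ^ r)).val = _
      simp [ZMod.val_zero, ZMod.val_one]
    · show Psi p n r (Phi p n r (heisY p n r)) = heisY p n r
      rw [Phi_Y]
      show heisY p n r ^ (1 : ZMod (p ^ n)).val * heisX p n r ^ (0 : ZMod (p ^ n)).val *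
          heisZ p n r ^ (0 : ZMod (p ^ r)).val = _
      simp [ZMod.val_zero, ZMod.val_one]
    · show Psi p n r (Phi p n r (heisZ p n r)) = heisZ p n r
      rw [Phi_Z]
      show heisY p n r ^ (0 : ZMod (p ^ n)).val * heisX p n r ^ (0 : ZMod (p ^ n)).val *
          heisZ p n r ^ (1 : ZMod (p ^ r)).val = _
      simp [ZMod.val_zero, ZMod.val_one]
  exact DFunLike.congr_fun h g

def equiv : heisenbergGroup p n r ≃* Heis p n r :=
  MonoidHom.toMulEquiv (Phi p n r) (Psi p n r)
    (MonoidHom.ext (Psi_Phi p n r)) (MonoidHom.ext (Phi_Psi p n r))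

end HeisIso

section Transfer

variable {G H : Type*} [Group G] [Group H]

lemma IsBeauvilleStructure.map (e : G ≃* H) {x₁ y₁ x₂ y₂ : G}
    (h : IsBeauvilleStructure x₁ y₁ x₂ y₂) :
    IsBeauvilleStructure (e x₁) (e y₁) (e x₂) (e y₂) := by
  obtain ⟨h1, h2, h3⟩ := h
  have hmap : ∀ a b : G, Subgroup.closure {a, b} = ⊤ →
      Subgroup.closure ({e a, e b} : Set H) = ⊤ := by
    intro a b hab
    have hcl := MonoidHom.map_closure e.toMonoidHom {a, b}
    rw [hab, Subgroup.map_top_of_surjective _ e.surjective] at hcl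
    have himg : (⇑e.toMonoidHom '' {a, b} : Set H) = {e a, e b} := by
      simp [Set.image_insert_eq, Set.image_singleton]
    rw [himg] at hcl
    exact hcl.symm
  have hsig : ∀ a b : G, beauvilleSigma (e a) (e b) = e '' beauvilleSigma a b := by
    intro a b
    ext t
    constructor
    · rintro ⟨i, g, ht | ht | ht⟩
      · exact ⟨e.symm g * a ^ i * (e.symm g)⁻¹, ⟨i, e.symm g, Or.inl rfl⟩, by
          simp [ht, map_mul, map_pow, map_inv]⟩
      · exact ⟨e.symm g * b ^ i * (e.symm g)⁻¹, ⟨i, e.symm g, Or.inr (Or.inl rfl)⟩, by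
          simp [ht, map_mul, map_pow, map_inv]⟩
      · exact ⟨e.symm g * (a * b) ^ i * (e.symm g)⁻¹, ⟨i, e.symm g, Or.inr (Or.inr rfl)⟩, by
          simp [ht, map_mul, map_pow, map_inv]⟩
    · rintro ⟨s, ⟨i, g, hs | hs | hs⟩, rfl⟩
      · exact ⟨i, e g, Or.inl (by simp [hs, map_mul, map_pow, map_inv])⟩
      · exact ⟨i, e g, Or.inr (Or.inl (by simp [hs, map_mul, map_pow, map_inv]))⟩
      · exact ⟨i, e g, Or.inr (Or.inr (by simp [hs, map_mul, map_pow, map_inv]))⟩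
  refine ⟨hmap _ _ h1, hmap _ _ h2, ?_⟩
  rw [hsig, hsig, ← Set.image_inter e.injective, h3, Set.image_singleton, map_one]

lemma IsStronglyRealStructure.of_map (e : G ≃* H) {x₁ y₁ x₂ y₂ : G}
    (h : IsStronglyRealStructure (e x₁) (e y₁) (e x₂) (e y₂)) :
    IsStronglyRealStructure x₁ y₁ x₂ y₂ := by
  obtain ⟨φ, g₁, g₂, h1, h2, h3, h4⟩ := h
  refine ⟨(e.trans φ).trans e.symm, e.symm g₁, e.symm g₂, ?_, ?_, ?_, ?_⟩ <;>
    apply e.injective <;>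
    simp only [map_mul, map_inv, MulEquiv.apply_symm_apply, MulEquiv.trans_apply]
  · exact h1
  · exact h2
  · exact h3
  · exact h4

end Transfer


/-- for a prime `p ≥ 5` and integers `n ≥ r ≥ 1`, the group
`G = ⟨x, y, z ∣ x^{p^n} = y^{p^n} = z^{p^r} = 1, [x,y] = z, [x,z] = [y,z] = 1⟩` is a
purely strongly real Beauville group: it admits a Beauville structure and every
Beauville structure of it is strongly real. -/
theorem heisenbergGroup_purely_strongly_real
    (p n r : ℕ) (hp : p.Prime) (hp5 : 5 ≤ p) (hr : 1 ≤ r) (hrn : r ≤ n) :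
    (∃ a b c d : heisenbergGroup p n r, IsBeauvilleStructure a b c d) ∧
    ∀ a b c d : heisenbergGroup p n r,
      IsBeauvilleStructure a b c d → IsStronglyRealStructure a b c d := by
  haveI : Fact (p ^ r ∣ p ^ n) := ⟨pow_dvd_pow p hrn⟩
  haveI : NeZero (p ^ n) := ⟨pow_ne_zero _ (by omega)⟩
  haveI : NeZero (p ^ r) := ⟨pow_ne_zero _ (by omega)⟩
  haveI : Fact (1 < p ^ n) := ⟨Nat.one_lt_pow (by omega) (by omega)⟩
  haveI : Fact (1 < p ^ r) := ⟨Nat.one_lt_pow (by omega) (by omega)⟩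
  set e := HeisIso.equiv p n r with he
  have hdet1 : IsUnit ((⟨1, 0, 0⟩ : HeisModel.Heis p n r).a * (⟨0, 1, 0⟩ : HeisModel.Heis p n r).b
      - (⟨0, 1, 0⟩ : HeisModel.Heis p n r).a * (⟨1, 0, 0⟩ : HeisModel.Heis p n r).b) := by
    show IsUnit ((1 : ZMod (p ^ n)) * 1 - 0 * 0)
    simp
  have hdet2 : IsUnit ((⟨1, 2, 0⟩ : HeisModel.Heis p n r).a * (⟨1, -1, 0⟩ : HeisModel.Heis p n r).b
      - (⟨1, -1, 0⟩ : HeisModel.Heis p n r).a * (⟨1, 2, 0⟩ : HeisModel.Heis p n r).b) := by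
    show IsUnit ((1 : ZMod (p ^ n)) * (-1) - 1 * 2)
    have h3 := (HeisModel.Heis.isUnit_three (p := p) hp hp5 n).neg
    have : (1 : ZMod (p ^ n)) * (-1) - 1 * 2 = -3 := by ring
    rw [this]
    exact h3
  constructor
  · have hb : IsBeauvilleStructure (⟨1, 0, 0⟩ : HeisModel.Heis p n r) ⟨0, 1, 0⟩ ⟨1, 2, 0⟩
        ⟨1, -1, 0⟩ :=
      ⟨HeisModel.Heis.closure_pair_eq_top hp hp5 hr hrn _ _ hdet1,
       HeisModel.Heis.closure_pair_eq_top hp hp5 hr hrn _ _ hdet2,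
       HeisModel.Heis.sigma_inter hp hp5 hr hrn⟩
    exact ⟨_, _, _, _, hb.map e.symm⟩
  · intro a b c d h
    have h' := h.map e
    obtain ⟨g₁, hg₁⟩ := HeisModel.Heis.exists_strong_conj hp hp5 hr hrn h'.1
    obtain ⟨g₂, hg₂⟩ := HeisModel.Heis.exists_strong_conj hp hp5 hr hrn h'.2.1
    exact IsStronglyRealStructure.of_map e
      ⟨HeisModel.Heis.phi, g₁, g₂, hg₁.1, hg₁.2, hg₂.1, hg₂.2⟩
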